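/- Let n ≥ 2 with n ≡ 0 (mod 4) or n ≡ 3 (mod 4). Then every linear map R : Sym_n(ℝ) → Sym_n(ℝ) which is SO(n)-equivariant and skew with respect to the trace form is identically zero. (Consequently there is no non-trivial GL_n⁺(ℝ)-invariant Poisson structure on the space of real symmetric positive definite n×n matrices for such n.) -/

import Mathlib

open Matrix

namespace NIP

variable {n : ℕ}

noncomputable def S (i j : Fin n) : Matrix (Fin n) (Fin n) ℝ :=
  Matrix.single i j 1 + Matrix.single j i 1

def ev (a b x : Fin n) : ℝ := if x = a ∨ x = b then -1 else 1

def dv (b x : Fin n) : ℝ := if x = b then -1 else 1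

lemma ev_mem {a b x : Fin n} (h : x = a ∨ x = b) : ev a b x = -1 := if_pos h
lemma ev_not {a b x : Fin n} (h1 : x ≠ a) (h2 : x ≠ b) : ev a b x = 1 :=
  if_neg (by rintro (h | h) <;> [exact h1 h; exact h2 h])
lemma ev_sq (a b x : Fin n) : ev a b x * ev a b x = 1 := by
  unfold ev; split_ifs <;> norm_num
lemma dv_self (b : Fin n) : dv b b = -1 := if_pos rfl
lemma dv_ne {b x : Fin n} (h : x ≠ b) : dv b x = 1 := if_neg h

noncomputable def sgM (a b : Fin n) : Matrix (Fin n) (Fin n) ℝ := diagonal (ev a b)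

noncomputable def rhoM (a b : Fin n) : Matrix (Fin n) (Fin n) ℝ :=
  diagonal (dv b) * (Equiv.swap a b).permMatrix ℝ

lemma S_comm (i j : Fin n) : S i j = S j i := add_comm _ _

lemma transpose_stdBasis (i j : Fin n) (c : ℝ) :
    (Matrix.single i j c)ᵀ = Matrix.single j i c := by
  ext a b
  simp [Matrix.single, Matrix.transpose_apply, and_comm]

lemma S_isSymm (i j : Fin n) : (S i j).IsSymm := by
  unfold Matrix.IsSymm S
  rw [transpose_add, transpose_stdBasis, transpose_stdBasis]
  exact add_comm _ _

lemma diag_conj (d : Fin n → ℝ) (k l : Fin n) :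
    diagonal d * Matrix.single k l (1:ℝ) * diagonal d
      = Matrix.single k l (d k * d l) := by
  ext a b
  simp only [Matrix.diagonal_mul, Matrix.mul_diagonal, Matrix.single,
    Matrix.of_apply]
  split_ifs with h
  · obtain ⟨rfl, rfl⟩ := h; ring
  · ring

lemma diag_conj_S (d : Fin n → ℝ) (k l : Fin n) :
    diagonal d * S k l * diagonal d = (d k * d l) • S k l := by
  unfold S
  rw [Matrix.mul_add, Matrix.add_mul, diag_conj, diag_conj, smul_add,
    smul_single, smul_single]
  rw [smul_eq_mul, mul_one, mul_comm (d l) (d k)]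

lemma perm_conj (f : Equiv.Perm (Fin n)) (M : Matrix (Fin n) (Fin n) ℝ) :
    (f.permMatrix ℝ) * M * (f.permMatrix ℝ)ᵀ = M.submatrix f f := by
  rw [Equiv.Perm.permMatrix, ← PEquiv.toMatrix_symm, ← Equiv.toPEquiv_symm,
    PEquiv.toMatrix_toPEquiv_mul, PEquiv.mul_toMatrix_toPEquiv]
  simp [Matrix.submatrix_submatrix]

lemma perm_orth (f : Equiv.Perm (Fin n)) :
    (f.permMatrix ℝ)ᵀ * (f.permMatrix ℝ) = 1 := by
  rw [Equiv.Perm.permMatrix, ← PEquiv.toMatrix_symm, ← Equiv.toPEquiv_symm,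
    ← PEquiv.toMatrix_trans, ← Equiv.toPEquiv_trans]
  simp

lemma stdBasis_submatrix (f : Equiv.Perm (Fin n)) (k l : Fin n) (c : ℝ) :
    (Matrix.single k l c).submatrix f f = Matrix.single (f.symm k) (f.symm l) c := by
  ext a b
  simp only [Matrix.submatrix_apply, Matrix.single, Matrix.of_apply]
  congr 1
  rw [eq_iff_iff]
  constructor
  · rintro ⟨rfl, rfl⟩; simp
  · rintro ⟨rfl, rfl⟩; simp

lemma S_submatrix (f : Equiv.Perm (Fin n)) (k l : Fin n) :
    (S k l).submatrix f f = S (f.symm k) (f.symm l) := by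
  simp only [S, Matrix.submatrix_add]
  change (Matrix.single k l (1:ℝ)).submatrix f f + (Matrix.single l k (1:ℝ)).submatrix f f = _
  rw [stdBasis_submatrix, stdBasis_submatrix]

-- sign matrix properties
lemma sgM_transpose (a b : Fin n) : (sgM a b)ᵀ = sgM a b := diagonal_transpose _

lemma sgM_orth (a b : Fin n) : (sgM a b)ᵀ * sgM a b = 1 := by
  rw [sgM_transpose, sgM, diagonal_mul_diagonal]
  rw [show (fun i => ev a b i * ev a b i) = fun _ => (1:ℝ) from funext fun x => ev_sq a b x]
  exact Matrix.diagonal_one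

lemma sgM_det {a b : Fin n} (hab : a ≠ b) : (sgM a b).det = 1 := by
  rw [sgM, Matrix.det_diagonal]
  have : ∀ x, ev a b x = (if x = a then (-1:ℝ) else 1) * (if x = b then -1 else 1) := by
    intro x
    unfold ev
    split_ifs with h1 h2 h3 <;> simp_all
  simp only [this]
  rw [Finset.prod_mul_distrib, Finset.prod_ite_eq' Finset.univ a fun _ => (-1:ℝ),
    Finset.prod_ite_eq' Finset.univ b fun _ => (-1:ℝ)]
  norm_num

lemma sgM_conj (a b k l : Fin n) :
    sgM a b * S k l * (sgM a b)ᵀ = (ev a b k * ev a b l) • S k l := by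
  rw [sgM_transpose, sgM, diag_conj_S]

-- rotation matrix properties
lemma dv_diag_sq (b : Fin n) : diagonal (dv b) * diagonal (dv b) = 1 := by
  rw [diagonal_mul_diagonal]
  rw [show (fun i => dv b i * dv b i) = fun _ => (1:ℝ) from funext fun x => by unfold dv; split_ifs <;> norm_num]
  exact Matrix.diagonal_one

lemma rhoM_orth (a b : Fin n) : (rhoM a b)ᵀ * rhoM a b = 1 := by
  rw [rhoM, Matrix.transpose_mul, diagonal_transpose]
  calc ((Equiv.swap a b).permMatrix ℝ)ᵀ * diagonal (dv b) * (diagonal (dv b) * (Equiv.swap a b).permMatrix ℝ)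
      = ((Equiv.swap a b).permMatrix ℝ)ᵀ * (diagonal (dv b) * diagonal (dv b)) * (Equiv.swap a b).permMatrix ℝ := by
        rw [Matrix.mul_assoc, Matrix.mul_assoc, Matrix.mul_assoc]
    _ = 1 := by rw [dv_diag_sq, Matrix.mul_one, perm_orth]

lemma rhoM_det {a b : Fin n} (hab : a ≠ b) : (rhoM a b).det = 1 := by
  rw [rhoM, Matrix.det_mul, Matrix.det_permutation, Equiv.Perm.sign_swap hab,
    Matrix.det_diagonal]
  rw [show (fun x => dv b x) = fun x => if x = b then (-1:ℝ) else 1 from rfl]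
  rw [Finset.prod_ite_eq' Finset.univ b fun _ => (-1:ℝ)]
  norm_num

lemma rhoM_conj (a b k l : Fin n) :
    rhoM a b * S k l * (rhoM a b)ᵀ
      = (dv b (Equiv.swap a b k) * dv b (Equiv.swap a b l)) •
          S (Equiv.swap a b k) (Equiv.swap a b l) := by
  rw [rhoM, Matrix.transpose_mul, diagonal_transpose]
  have : diagonal (dv b) * (Equiv.swap a b).permMatrix ℝ * S k l *
        (((Equiv.swap a b).permMatrix ℝ)ᵀ * diagonal (dv b))
      = diagonal (dv b) * ((Equiv.swap a b).permMatrix ℝ * S k l *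
          ((Equiv.swap a b).permMatrix ℝ)ᵀ) * diagonal (dv b) := by
    simp only [Matrix.mul_assoc]
  rw [this, perm_conj, S_submatrix, Equiv.symm_swap, diag_conj_S]

lemma exists_third (hn3 : 3 ≤ n) (x y : Fin n) : ∃ m : Fin n, m ≠ x ∧ m ≠ y := by
  by_contra h
  push_neg at h
  have hsub : (Finset.univ : Finset (Fin n)) ⊆ {x, y} := by
    intro m _
    by_cases hmx : m = x
    · simp [hmx]
    · simp [h m hmx]
  have h1 := Finset.card_le_card hsub
  have h2 : ({x, y} : Finset (Fin n)).card ≤ 2 := by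
    refine le_trans (Finset.card_insert_le x {y}) ?_
    simp
  rw [Finset.card_univ, Fintype.card_fin] at h1
  omega

lemma two_smul_expand (w : Matrix (Fin n) (Fin n) ℝ) (hw : w.IsSymm) :
    (2:ℝ) • w = ∑ p : Fin n × Fin n, w p.1 p.2 • S p.1 p.2 := by
  have e1 : ∑ p : Fin n × Fin n, w p.1 p.2 • Matrix.single p.1 p.2 (1:ℝ) = w := by
    rw [Fintype.sum_prod_type]
    conv_rhs => rw [matrix_eq_sum_single w]
    refine Finset.sum_congr rfl fun i _ => Finset.sum_congr rfl fun j _ => ?_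
    rw [smul_single, smul_eq_mul, mul_one]
  have e2 : ∑ p : Fin n × Fin n, w p.1 p.2 • Matrix.single p.2 p.1 (1:ℝ) = w := by
    rw [Fintype.sum_prod_type, Finset.sum_comm]
    conv_rhs => rw [matrix_eq_sum_single w]
    refine Finset.sum_congr rfl fun j _ => Finset.sum_congr rfl fun i _ => ?_
    rw [smul_single, smul_eq_mul, mul_one, hw.apply i j]
  have hsplit : ∑ p : Fin n × Fin n, w p.1 p.2 • S p.1 p.2
      = (∑ p : Fin n × Fin n, w p.1 p.2 • Matrix.single p.1 p.2 (1:ℝ))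
        + ∑ p : Fin n × Fin n, w p.1 p.2 • Matrix.single p.2 p.1 (1:ℝ) := by
    rw [← Finset.sum_add_distrib]
    refine Finset.sum_congr rfl fun p _ => ?_
    rw [S, smul_add]
  rw [hsplit, e1, e2, two_smul]

lemma trace_sq_zero (w : Matrix (Fin n) (Fin n) ℝ) (hw : w.IsSymm)
    (h : Matrix.trace (w * w) = 0) : w = 0 := by
  have ht : Matrix.trace (w * w) = ∑ i, ∑ j, w i j ^ 2 := by
    rw [Matrix.trace]
    refine Finset.sum_congr rfl fun i _ => ?_
    rw [Matrix.diag_apply, Matrix.mul_apply]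
    refine Finset.sum_congr rfl fun j _ => ?_
    rw [hw.apply i j]
    ring
  rw [ht] at h
  have hz := (Finset.sum_eq_zero_iff_of_nonneg
    (fun i _ => Finset.sum_nonneg fun j _ => sq_nonneg (w i j))).1 h
  ext i j
  have hz2 := (Finset.sum_eq_zero_iff_of_nonneg
    (fun j _ => sq_nonneg (w i j))).1 (hz i (Finset.mem_univ i)) j (Finset.mem_univ j)
  have := sq_eq_zero_iff.1 hz2
  simpa using this

end NIP

open NIP

/-- for `n ≡ 0` or `3 (mod 4)`, every linear map on the real symmetric
`n × n` matrices which is `SO(n)`-equivariant and skew with respect to the trace form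
vanishes identically (on the symmetric matrices). Consequently there is no non-trivial
`GL_n⁺(ℝ)`-invariant Poisson structure on `S_n^{++}(ℝ)` for such `n`. -/
theorem no_invariant_poisson_on_spd (n : ℕ) (hn : 2 ≤ n)
    (hmod : n % 4 = 0 ∨ n % 4 = 3)
    (R : Matrix (Fin n) (Fin n) ℝ →ₗ[ℝ] Matrix (Fin n) (Fin n) ℝ)
    (hRsymm : ∀ u : Matrix (Fin n) (Fin n) ℝ, u.IsSymm → (R u).IsSymm)
    (hRequiv : ∀ a : Matrix (Fin n) (Fin n) ℝ, aᵀ * a = 1 → a.det = 1 →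
      ∀ u : Matrix (Fin n) (Fin n) ℝ, u.IsSymm → R (a * u * aᵀ) = a * R u * aᵀ)
    (hRskew : ∀ u v : Matrix (Fin n) (Fin n) ℝ, u.IsSymm → v.IsSymm →
      Matrix.trace (R u * v) = - Matrix.trace (u * R v)) :
    ∀ u : Matrix (Fin n) (Fin n) ℝ, u.IsSymm → R u = 0 := by
  classical
  have hn3 : 3 ≤ n := by rcases hmod with h | h <;> omega
  -- invariance of the bilinear form
  have hInv : ∀ a : Matrix (Fin n) (Fin n) ℝ, aᵀ * a = 1 → a.det = 1 →
      ∀ u v : Matrix (Fin n) (Fin n) ℝ, u.IsSymm →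
      Matrix.trace (R (a * u * aᵀ) * (a * v * aᵀ)) = Matrix.trace (R u * v) := by
    intro a ha1 ha2 u v hu
    rw [hRequiv a ha1 ha2 u hu]
    have h2 : a * R u * aᵀ * (a * v * aᵀ) = a * (R u * v) * aᵀ := by
      have h3 : aᵀ * (a * (v * aᵀ)) = v * aᵀ := by
        rw [← Matrix.mul_assoc, ha1, Matrix.one_mul]
      simp only [Matrix.mul_assoc]
      rw [h3]
    rw [h2, Matrix.trace_mul_cycle, ha1, Matrix.one_mul]
  -- skewness on basis elements
  have hskewT : ∀ i j k l : Fin n,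
      Matrix.trace (R (S i j) * S k l) = - Matrix.trace (R (S k l) * S i j) := by
    intro i j k l
    have h := hRskew (S i j) (S k l) (S_isSymm i j) (S_isSymm k l)
    have h2 : Matrix.trace (S i j * R (S k l)) = Matrix.trace (R (S k l) * S i j) :=
      Matrix.trace_mul_comm _ _
    rw [h2] at h
    exact h
  have hself : ∀ i j : Fin n, Matrix.trace (R (S i j) * S i j) = 0 := by
    intro i j
    have := hskewT i j i j
    linarith
  -- sign-matrix relation
  have hsg : ∀ a b : Fin n, a ≠ b → ∀ i j k l : Fin n,
      (ev a b i * ev a b j) * ((ev a b k * ev a b l) *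
        Matrix.trace (R (S i j) * S k l)) = Matrix.trace (R (S i j) * S k l) := by
    intro a b hab i j k l
    have h := hInv (sgM a b) (sgM_orth a b) (sgM_det hab) (S i j) (S k l) (S_isSymm i j)
    rw [sgM_conj, sgM_conj, _root_.map_smul, smul_mul_assoc, mul_smul_comm,
      Matrix.trace_smul, Matrix.trace_smul, smul_eq_mul, smul_eq_mul] at h
    exact h
  -- rotation relation
  have hrho : ∀ a b : Fin n, a ≠ b → ∀ i j k l : Fin n,
      (dv b (Equiv.swap a b i) * dv b (Equiv.swap a b j)) *
        ((dv b (Equiv.swap a b k) * dv b (Equiv.swap a b l)) *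
          Matrix.trace (R (S (Equiv.swap a b i) (Equiv.swap a b j)) *
            S (Equiv.swap a b k) (Equiv.swap a b l)))
      = Matrix.trace (R (S i j) * S k l) := by
    intro a b hab i j k l
    have h := hInv (rhoM a b) (rhoM_orth a b) (rhoM_det hab) (S i j) (S k l) (S_isSymm i j)
    rw [rhoM_conj, rhoM_conj, _root_.map_smul, smul_mul_assoc, mul_smul_comm,
      Matrix.trace_smul, Matrix.trace_smul, smul_eq_mul, smul_eq_mul] at h
    exact h
  -- core: the form vanishes on all basis pairs
  have hcore : ∀ i j k l : Fin n, Matrix.trace (R (S i j) * S k l) = 0 := by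
    intro i j k l
    by_cases hc1 : i = k ∧ j = l
    · obtain ⟨rfl, rfl⟩ := hc1
      exact hself i j
    by_cases hc2 : i = l ∧ j = k
    · obtain ⟨rfl, rfl⟩ := hc2
      rw [S_comm j i]
      exact hself i j
    by_cases hkl : k = l
    · subst hkl
      by_cases hij : i = j
      · subst hij
        have hik : i ≠ k := fun h => hc1 ⟨h, h⟩
        have h := hrho i k hik i i k k
        rw [Equiv.swap_apply_left, Equiv.swap_apply_right] at h
        rw [dv_self, dv_ne hik] at h
        have hs := hskewT k k i i
        linarith
      · obtain ⟨m, hmi, hmj⟩ := exists_third hn3 i j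
        have h := hsg i m hmi.symm i j k k
        rw [ev_sq i m k] at h
        rw [ev_mem (Or.inl rfl)] at h
        rw [ev_not (Ne.symm hij) (Ne.symm hmj)] at h
        linarith
    · by_cases hij : i = j
      · subst hij
        obtain ⟨m, hmk, hml⟩ := exists_third hn3 k l
        have h := hsg k m hmk.symm i i k l
        rw [ev_sq k m i] at h
        rw [ev_mem (Or.inl rfl)] at h
        rw [ev_not (Ne.symm hkl) (Ne.symm hml)] at h
        linarith
      · by_cases hd : i ≠ k ∧ i ≠ l ∧ j ≠ k ∧ j ≠ l
        · obtain ⟨hik, hil, hjk, hjl⟩ := hd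
          have h1 := hrho i k hik i j k l
          rw [Equiv.swap_apply_left, Equiv.swap_apply_right,
            Equiv.swap_apply_of_ne_of_ne (Ne.symm hij) hjk,
            Equiv.swap_apply_of_ne_of_ne (Ne.symm hil) (Ne.symm hkl)] at h1
          rw [dv_self, dv_ne hjk, dv_ne hik, dv_ne (Ne.symm hkl)] at h1
          have h2 := hrho j l hjl k j i l
          rw [Equiv.swap_apply_of_ne_of_ne (Ne.symm hjk) hkl,
            Equiv.swap_apply_left,
            Equiv.swap_apply_of_ne_of_ne hij hil,
            Equiv.swap_apply_right] at h2
          rw [dv_self, dv_ne hkl, dv_ne hil, dv_ne hjl] at h2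
          have h3 := hskewT k l i j
          linarith
        · have hcoe : ev i j k * ev i j l = -1 := by
            by_cases hk : k = i ∨ k = j
            · have hl1 : l ≠ i := by
                rintro rfl
                rcases hk with rfl | h
                · exact hkl rfl
                · exact hc2 ⟨rfl, h.symm⟩
              have hl2 : l ≠ j := by
                rintro rfl
                rcases hk with h | rfl
                · exact hc1 ⟨h.symm, rfl⟩
                · exact hkl rfl
              rw [ev_mem hk, ev_not hl1 hl2]
              norm_num
            · push_neg at hk
              have hl : l = i ∨ l = j := by
                by_contra hno
                push_neg at hno
                exact hd ⟨Ne.symm hk.1, Ne.symm hno.1, Ne.symm hk.2, Ne.symm hno.2⟩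
              rw [ev_not hk.1 hk.2, ev_mem hl]
              norm_num
          have h := hsg i j hij i j k l
          rw [ev_mem (a := i) (b := j) (x := i) (Or.inl rfl),
            ev_mem (a := i) (b := j) (x := j) (Or.inr rfl), hcoe] at h
          linarith
  -- the bilinear form vanishes on all symmetric pairs
  have hBzero : ∀ u v : Matrix (Fin n) (Fin n) ℝ, u.IsSymm → v.IsSymm →
      Matrix.trace (R u * v) = 0 := by
    intro u v hu hv
    have h4 : Matrix.trace (R ((2:ℝ) • u) * ((2:ℝ) • v))
        = 4 * Matrix.trace (R u * v) := by
      rw [_root_.map_smul, smul_mul_assoc, mul_smul_comm, Matrix.trace_smul,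
        Matrix.trace_smul, smul_eq_mul, smul_eq_mul]
      ring
    have h0 : Matrix.trace (R ((2:ℝ) • u) * ((2:ℝ) • v)) = 0 := by
      rw [two_smul_expand u hu, two_smul_expand v hv, map_sum, Finset.sum_mul,
        Matrix.trace_sum]
      refine Finset.sum_eq_zero fun p _ => ?_
      rw [_root_.map_smul, smul_mul_assoc, Matrix.trace_smul, Matrix.mul_sum,
        Matrix.trace_sum]
      rw [Finset.sum_eq_zero fun q _ => ?_]
      · simp
      · rw [mul_smul_comm, Matrix.trace_smul, hcore]
        simp
    linarith
  intro u hu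
  exact trace_sq_zero (R u) (hRsymm u hu) (hBzero u (R u) hu (hRsymm u hu))
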